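/- Let w = (123)²0(12341)² = 12312301234112341, a word of length 17 over the alphabet {0,1,2,3,4}. Then A_N(w) = 8. -/

import Mathlib

/-- A nondeterministic finite automaton with state set `Fin m` over alphabet `σ`. -/
structure NFAc (σ : Type) (m : ℕ) where
  start : Fin m
  accept : Fin m → Prop
  step : Fin m → σ → Fin m → Prop

/-- `M.RunFrom p y l` : `l` is the sequence of states of an accepting run of `M`
on the word `y`, starting at state `p` (so `l` lists the `y.length + 1` visited
states, the last one being an accepting state). -/
def NFAc.RunFrom {σ : Type} {m : ℕ} (M : NFAc σ m) : Fin m → List σ → List (Fin m) → Prop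
  | p, [], l => l = [p] ∧ M.accept p
  | p, a :: y, l => ∃ q l', M.step p a q ∧ NFAc.RunFrom M q y l' ∧ l = p :: l'

/-- `M` accepts `x`, and there is exactly one accepting path of `M` of length `x.length`
(counting both the word read and the sequence of states traversed). -/
def NFAc.UniquelyAccepts {σ : Type} {m : ℕ} (M : NFAc σ m) (x : List σ) : Prop :=
  (∃ l, M.RunFrom M.start x l) ∧
  ∀ y l y' l', y.length = x.length → y'.length = x.length →
    M.RunFrom M.start y l → M.RunFrom M.start y' l' → y = y' ∧ l = l'

/-- The nondeterministic automatic complexity of a word `x`: the least number of states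
of an NFA accepting `x` uniquely among words of its length, along a unique path. -/
noncomputable def AN {σ : Type} (x : List σ) : ℕ :=
  sInf {m | ∃ M : NFAc σ m, M.UniquelyAccepts x}

/-- The word `(123)²0(12341)² = 12312301234112341` over the alphabet `{0,1,2,3,4}`. -/
def wordW : List (Fin 5) := [1,2,3,1,2,3,0,1,2,3,4,1,1,2,3,4,1]


def PathP {σ : Type} {m : ℕ} (M : NFAc σ m) : Fin m → List σ → List (Fin m) → Fin m → Prop
  | p, [], l, q => l = [] ∧ p = q
  | p, a :: y, l, q => ∃ r l', M.step p a r ∧ PathP M r y l' q ∧ l = p :: l'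

theorem run_iff {σ : Type} {m : ℕ} (M : NFAc σ m) (p : Fin m) (y : List σ) (l : List (Fin m)) :
    M.RunFrom p y l ↔ ∃ q l', PathP M p y l' q ∧ M.accept q ∧ l = l' ++ [q] := by
  induction y generalizing p l with
  | nil =>
    simp only [NFAc.RunFrom, PathP]
    constructor
    · rintro ⟨rfl, h⟩; exact ⟨p, [], ⟨rfl, rfl⟩, h, rfl⟩
    · rintro ⟨q, l', ⟨rfl, rfl⟩, h, rfl⟩; exact ⟨rfl, h⟩
  | cons a y ih =>
    simp only [NFAc.RunFrom, PathP]
    constructor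
    · rintro ⟨r, l', hst, hrun, rfl⟩
      obtain ⟨q, l'', hp, ha, rfl⟩ := (ih r l').mp hrun
      exact ⟨q, p :: l'', ⟨r, l'', hst, hp, rfl⟩, ha, rfl⟩
    · rintro ⟨q, l', ⟨r, l'', hst, hp, rfl⟩, ha, rfl⟩
      exact ⟨r, l'' ++ [q], hst, (ih r _).mpr ⟨q, l'', hp, ha, rfl⟩, rfl⟩

theorem path_length {σ : Type} {m : ℕ} (M : NFAc σ m) {p q : Fin m} {y : List σ} {l : List (Fin m)}
    (h : PathP M p y l q) : l.length = y.length := by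
  induction y generalizing p l with
  | nil => obtain ⟨rfl, rfl⟩ := h; rfl
  | cons a y ih => obtain ⟨r, l', _, hp, rfl⟩ := h; simp [ih hp]

theorem path_append {σ : Type} {m : ℕ} (M : NFAc σ m) {p r q : Fin m} {y1 y2 : List σ}
    {l1 l2 : List (Fin m)} (h1 : PathP M p y1 l1 r) (h2 : PathP M r y2 l2 q) :
    PathP M p (y1 ++ y2) (l1 ++ l2) q := by
  induction y1 generalizing p l1 with
  | nil => obtain ⟨rfl, rfl⟩ := h1; simpa using h2
  | cons a y ih =>
    obtain ⟨s, l', hst, hp, rfl⟩ := h1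
    exact ⟨s, l' ++ l2, hst, ih hp, rfl⟩

theorem path_split {σ : Type} {m : ℕ} (M : NFAc σ m) {p q : Fin m} {y1 y2 : List σ}
    {l : List (Fin m)} (h : PathP M p (y1 ++ y2) l q) :
    ∃ r l1 l2, PathP M p y1 l1 r ∧ PathP M r y2 l2 q ∧ l = l1 ++ l2 := by
  induction y1 generalizing p l with
  | nil => exact ⟨p, [], l, ⟨rfl, rfl⟩, h, rfl⟩
  | cons a y ih =>
    obtain ⟨s, l', hst, hp, rfl⟩ := h
    obtain ⟨r, l1, l2, h1, h2, rfl⟩ := ih hp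
    exact ⟨r, p :: l1, l2, ⟨s, l1, hst, h1, rfl⟩, h2, rfl⟩

theorem path_head {σ : Type} {m : ℕ} (M : NFAc σ m) {p q : Fin m} {y : List σ}
    {l : List (Fin m)} (h : PathP M p y l q) : (l ++ [q])[0]'(by simp) = p := by
  cases y with
  | nil => obtain ⟨rfl, rfl⟩ := h; rfl
  | cons a y => obtain ⟨r, l', _, _, rfl⟩ := h; rfl

set_option maxHeartbeats 1000000 in
theorem triples : ∀ i j k : Fin 18, i < j → j < k →
    ((wordW.drop i.val).take (j.val - i.val)) ++ ((wordW.drop j.val).take (k.val - j.val)) =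
      ((wordW.drop j.val).take (k.val - j.val)) ++ ((wordW.drop i.val).take (j.val - i.val)) →
    ((i.val, j.val, k.val) = (0,3,6) ∨ (i.val, j.val, k.val) = (7,12,17) ∨
      (i.val, j.val, k.val) = (11,12,13)) := by decide

open Finset in
theorem count_lemma {m : ℕ} (hm : m ≤ 7) (f : Fin 18 → Fin m)
    (H : ∀ i j k : Fin 18, i < j → j < k → f i = f j → f j = f k →
      ((i.val, j.val, k.val) = (0,3,6) ∨ (i.val, j.val, k.val) = (7,12,17) ∨
        (i.val, j.val, k.val) = (11,12,13))) : False := by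
  classical
  set F : Fin m → Finset (Fin 18) := fun p => univ.filter (fun x => f x = p) with hF
  -- extraction of sorted elements
  have key : ∀ p : Fin m, 3 ≤ (F p).card →
      ((F p).card ≤ 3 ∧ (f 0 = p ∨ f 12 = p)) := by
    intro p hp
    set l := (F p).sort (· ≤ ·) with hl
    have hlen : l.length = (F p).card := Finset.length_sort _
    have hsort : l.Pairwise (· < ·) := (Finset.sortedLT_sort _).pairwise
    have hmem : ∀ x ∈ l, f x = p := by
      intro x hx
      have := (Finset.mem_sort (α := Fin 18) (· ≤ ·)).mp hx
      exact (Finset.mem_filter.mp this).2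
    match hll : l, hlen, hsort, hmem with
    | [], hlen, _, _ => exfalso; simp at hlen; omega
    | [x1], hlen, _, _ => exfalso; simp at hlen; omega
    | [x1, x2], hlen, _, _ => exfalso; simp at hlen; omega
    | x1 :: x2 :: x3 :: rest, hlen, hsort, hmem =>
      have h12 : x1 < x2 := by
        have := hsort; simp [List.pairwise_cons] at this; exact this.1.1
      have h23 : x2 < x3 := by
        have := hsort; simp [List.pairwise_cons] at this; exact this.2.1.1
      have hf1 : f x1 = p := hmem _ (by simp)
      have hf2 : f x2 = p := hmem _ (by simp)
      have hf3 : f x3 = p := hmem _ (by simp)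
      have htrip := H x1 x2 x3 h12 h23 (hf1.trans hf2.symm) (hf2.trans hf3.symm)
      constructor
      · by_contra hc
        push_neg at hc
        match rest, hlen with
        | [], hlen => simp at hlen; omega
        | x4 :: rest, hlen =>
          have h34 : x3 < x4 := by
            have := hsort; simp [List.pairwise_cons] at this; exact this.2.2.1.1
          have hf4 : f x4 = p := hmem _ (by simp)
          have htrip2 := H x1 x2 x4 h12 (h23.trans h34) (hf1.trans hf2.symm) (hf2.trans hf4.symm)
          simp only [Prod.mk.injEq] at htrip htrip2
          have h34' : x3.val < x4.val := h34
          omega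
      · simp only [Prod.mk.injEq] at htrip
        rcases htrip with ⟨h1, h2, h3⟩ | ⟨h1, h2, h3⟩ | ⟨h1, h2, h3⟩
        · left; rwa [show (0 : Fin 18) = x1 from by apply Fin.ext; simp only [h1]; decide]
        · right; rwa [show (12 : Fin 18) = x2 from by apply Fin.ext; simp only [h2]; decide]
        · right; rwa [show (12 : Fin 18) = x2 from by apply Fin.ext; simp only [h2]; decide]
  -- the set of big states
  set A : Finset (Fin m) := univ.filter (fun p => 3 ≤ (F p).card) with hA
  have hAsub : A ⊆ {f 0, f 12} := by
    intro p hp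
    have := (key p (Finset.mem_filter.mp hp).2).2
    simp only [Finset.mem_insert, Finset.mem_singleton]
    rcases this with h | h
    · exact Or.inl h.symm
    · exact Or.inr h.symm
  have hAcard : A.card ≤ 2 :=
    le_trans (Finset.card_le_card hAsub) (le_trans (Finset.card_insert_le _ _) (by simp))
  have hsum : (univ : Finset (Fin 18)).card = ∑ p : Fin m, (F p).card := by
    apply Finset.card_eq_sum_card_fiberwise
    intro x _; exact Finset.mem_univ _
  have hbound : ∀ p : Fin m, (F p).card ≤ 2 + (if p ∈ A then 1 else 0) := by
    intro p
    by_cases h3 : 3 ≤ (F p).card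
    · have hmemA : p ∈ A := by simp [hA, h3]
      simp [hmemA]
      exact (key p h3).1
    · push_neg at h3
      split <;> omega
  have : (18 : ℕ) ≤ ∑ p : Fin m, (2 + (if p ∈ A then 1 else 0)) := by
    calc (18 : ℕ) = (univ : Finset (Fin 18)).card := by simp
    _ = ∑ p : Fin m, (F p).card := hsum
    _ ≤ _ := Finset.sum_le_sum (fun p _ => hbound p)
  have hsplit : ∑ p : Fin m, (2 + (if p ∈ A then 1 else 0)) = 2 * m + A.card := by
    rw [Finset.sum_add_distrib]
    congr 1
    · simp [mul_comm]
    · rw [Finset.sum_ite_mem, Finset.univ_inter, Finset.card_eq_sum_ones A]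
  omega

theorem lower : ∀ m : ℕ, (∃ M : NFAc (Fin 5) m, M.UniquelyAccepts wordW) → 8 ≤ m := by
  rintro m ⟨M, hM⟩
  by_contra hcon
  push_neg at hcon
  obtain ⟨⟨l0, hrun0⟩, huniq⟩ := hM
  obtain ⟨q, L, hpath, hacc, rfl⟩ := (run_iff M _ _ _).mp hrun0
  have hL : L.length = 17 := by rw [path_length M hpath]; rfl
  have hfllen : (L ++ [q]).length = 18 := by simp [hL]
  set fl : List (Fin m) := L ++ [q] with hfl
  let f : Fin 18 → Fin m := fun t => fl[t.val]'(by omega)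
  apply count_lemma (by omega) f
  intro i j k hij hjk hfij hfjk
  have hiv : i.val < j.val := hij
  have hjv : j.val < k.val := hjk
  have hkv : k.val < 18 := k.isLt
  have hwlen : wordW.length = 17 := rfl
  set y1 := wordW.take i.val with hy1
  set y2 := (wordW.drop i.val).take (j.val - i.val) with hy2
  set y3 := (wordW.drop j.val).take (k.val - j.val) with hy3
  set y4 := wordW.drop k.val with hy4
  have hy34 : y3 ++ y4 = wordW.drop j.val := by
    rw [hy3, hy4, show wordW.drop k.val = ((wordW.drop j.val)).drop (k.val - j.val) by
      rw [List.drop_drop]; congr 1; omega]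
    exact List.take_append_drop _ _
  have hy2d : y2 ++ wordW.drop j.val = wordW.drop i.val := by
    rw [hy2, show wordW.drop j.val = ((wordW.drop i.val)).drop (j.val - i.val) by
      rw [List.drop_drop]; congr 1; omega]
    exact List.take_append_drop _ _
  have hw : wordW = y1 ++ (y2 ++ (y3 ++ y4)) := by
    rw [hy34, hy2d, hy1, List.take_append_drop]
  have hl1 : y1.length = i.val := by rw [hy1, List.length_take]; omega
  have hl2 : y2.length = j.val - i.val := by
    rw [hy2, List.length_take, List.length_drop]; omega
  have hl3 : y3.length = k.val - j.val := by
    rw [hy3, List.length_take, List.length_drop]; omega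
  have hl4 : y4.length = 17 - k.val := by rw [hy4, List.length_drop, hwlen]
  have hpath' : PathP M M.start (y1 ++ (y2 ++ (y3 ++ y4))) L q := by rw [← hw]; exact hpath
  obtain ⟨r1, l1, lr, h1, hrest, hLe⟩ := path_split M hpath'
  obtain ⟨r2, l2, lr2, h2, hrest2, hLe2⟩ := path_split M hrest
  obtain ⟨r3, l3, l4, h3, h4, hLe3⟩ := path_split M hrest2
  have hlen1 : l1.length = i.val := (path_length M h1).trans hl1
  have hlen2 : l2.length = j.val - i.val := (path_length M h2).trans hl2
  have hlen3 : l3.length = k.val - j.val := (path_length M h3).trans hl3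
  -- values of f
  have hfi : f i = r1 := by
    show fl[i.val]' _ = r1
    have e1 : fl = l1 ++ (lr ++ [q]) := by rw [hfl, hLe, List.append_assoc]
    simp only [e1]
    rw [List.getElem_append_right (by omega)]
    have : i.val - l1.length = 0 := by omega
    simp only [this]
    exact path_head M hrest
  have hfj : f j = r2 := by
    show fl[j.val]' _ = r2
    have e2 : fl = (l1 ++ l2) ++ (lr2 ++ [q]) := by
      rw [hfl, hLe, hLe2, List.append_assoc, List.append_assoc, List.append_assoc]
    simp only [e2]
    rw [List.getElem_append_right (by simp; omega)]
    have : j.val - (l1 ++ l2).length = 0 := by simp; omega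
    simp only [this]
    exact path_head M hrest2
  have hfk : f k = r3 := by
    show fl[k.val]' _ = r3
    have e3 : fl = ((l1 ++ l2) ++ l3) ++ (l4 ++ [q]) := by
      rw [hfl, hLe, hLe2, hLe3]
      simp [List.append_assoc]
    simp only [e3]
    rw [List.getElem_append_right (by simp; omega)]
    have : k.val - ((l1 ++ l2) ++ l3).length = 0 := by simp; omega
    simp only [this]
    exact path_head M h4
  have e12 : r2 = r1 := by rw [← hfi, ← hfj, hfij]
  have e13 : r3 = r1 := by rw [← hfk, ← hfjk, ← hfij, hfi]
  subst e12 e13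
  have hswap : PathP M M.start (y1 ++ (y3 ++ (y2 ++ y4))) (l1 ++ (l3 ++ (l2 ++ l4))) q :=
    path_append M h1 (path_append M h3 (path_append M h2 h4))
  have hrun' : M.RunFrom M.start (y1 ++ (y3 ++ (y2 ++ y4))) ((l1 ++ (l3 ++ (l2 ++ l4))) ++ [q]) :=
    (run_iff M _ _ _).mpr ⟨q, _, hswap, hacc, rfl⟩
  have hylen : (y1 ++ (y3 ++ (y2 ++ y4))).length = wordW.length := by
    simp only [List.length_append, hl1, hl2, hl3, hl4, hwlen]; omega
  obtain ⟨hyeq, -⟩ := huniq wordW fl _ _ rfl hylen hrun0 hrun'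
  have hc : y1 ++ (y2 ++ (y3 ++ y4)) = y1 ++ (y3 ++ (y2 ++ y4)) := hw.symm.trans hyeq
  have hc2 : y2 ++ (y3 ++ y4) = y3 ++ (y2 ++ y4) := by
    exact List.append_cancel_left hc
  have hc3 : y2 ++ y3 = y3 ++ y2 := by
    have : (y2 ++ y3) ++ y4 = (y3 ++ y2) ++ y4 := by
      simpa [List.append_assoc] using hc2
    exact List.append_cancel_right this
  exact triples i j k hij hjk hc3


def delta : Fin 8 → Fin 5 → Option (Fin 8) := fun p a =>
  match p.val, a.val with
  | 0, 1 => some 1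
  | 1, 2 => some 2
  | 2, 3 => some 0
  | 0, 0 => some 3
  | 3, 1 => some 4
  | 4, 2 => some 5
  | 5, 3 => some 6
  | 6, 4 => some 7
  | 7, 1 => some 3
  | _, _ => none

def M8 : NFAc (Fin 5) 8 where
  start := 0
  accept p := p = 3
  step p a q := delta p a = some q

/-- words and state lists for the B cycle -/
def W5 : ℕ → List (Fin 5)
  | 0 => []
  | b + 1 => [1,2,3,4,1] ++ W5 b

def L5 : ℕ → List (Fin 8)
  | 0 => [3]
  | b + 1 => [3,4,5,6,7] ++ L5 b

def W3 : ℕ → List (Fin 5)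
  | 0 => []
  | a + 1 => [1,2,3] ++ W3 a

def L3 : ℕ → List (Fin 8)
  | 0 => []
  | a + 1 => [0,1,2] ++ L3 a


theorem stepM8 {p : Fin 8} {a : Fin 5} {q : Fin 8} (h : delta p a = some q) : M8.step p a q := h

theorem runB : ∀ b, M8.RunFrom 3 (W5 b) (L5 b)
  | 0 => ⟨rfl, rfl⟩
  | b + 1 => ⟨4, _, stepM8 (by decide), ⟨5, _, stepM8 (by decide), ⟨6, _, stepM8 (by decide),
      ⟨7, _, stepM8 (by decide), ⟨3, _, stepM8 (by decide), runB b, rfl⟩, rfl⟩, rfl⟩, rfl⟩, rfl⟩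

theorem runA : ∀ a b, M8.RunFrom 0 (W3 a ++ 0 :: W5 b) (L3 a ++ 0 :: L5 b)
  | 0, b => ⟨3, _, stepM8 (by decide), runB b, rfl⟩
  | a + 1, b => ⟨1, _, stepM8 (by decide), ⟨2, _, stepM8 (by decide),
      ⟨0, _, stepM8 (by decide), runA a b, rfl⟩, rfl⟩, rfl⟩

theorem W5_length : ∀ b, (W5 b).length = 5 * b
  | 0 => rfl
  | b + 1 => by simp [W5, W5_length b]; omega

theorem W3_length : ∀ a, (W3 a).length = 3 * a
  | 0 => rfl
  | a + 1 => by simp [W3, W3_length a]; omega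

theorem inv0 : ∀ a (q : Fin 8), delta 0 a = some q → (a = 1 ∧ q = 1) ∨ (a = 0 ∧ q = 3) := by decide
theorem inv1 : ∀ a (q : Fin 8), delta 1 a = some q → a = 2 ∧ q = 2 := by decide
theorem inv2 : ∀ a (q : Fin 8), delta 2 a = some q → a = 3 ∧ q = 0 := by decide
theorem inv3 : ∀ a (q : Fin 8), delta 3 a = some q → a = 1 ∧ q = 4 := by decide
theorem inv4 : ∀ a (q : Fin 8), delta 4 a = some q → a = 2 ∧ q = 5 := by decide
theorem inv5 : ∀ a (q : Fin 8), delta 5 a = some q → a = 3 ∧ q = 6 := by decide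
theorem inv6 : ∀ a (q : Fin 8), delta 6 a = some q → a = 4 ∧ q = 7 := by decide
theorem inv7 : ∀ a (q : Fin 8), delta 7 a = some q → a = 1 ∧ q = 3 := by decide

theorem soundB : ∀ n (y : List (Fin 5)) (l : List (Fin 8)), y.length = n →
    M8.RunFrom 3 y l → ∃ b, y = W5 b ∧ l = L5 b := by
  intro n
  induction n using Nat.strong_induction_on with
  | _ n ih =>
    intro y l hlen hrun
    match y, hlen with
    | [], hlen => exact ⟨0, rfl, hrun.1⟩
    | a :: y, hlen =>
      obtain ⟨q, l1, hst, hrun, rfl⟩ := hrun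
      obtain ⟨rfl, rfl⟩ := inv3 _ _ hst
      match y with
      | [] => exact absurd hrun.2 (show ¬((_:Fin 8) = 3) by decide)
      | a :: y =>
        obtain ⟨q, l2, hst, hrun, rfl⟩ := hrun
        obtain ⟨rfl, rfl⟩ := inv4 _ _ hst
        match y with
        | [] => exact absurd hrun.2 (show ¬((_:Fin 8) = 3) by decide)
        | a :: y =>
          obtain ⟨q, l3, hst, hrun, rfl⟩ := hrun
          obtain ⟨rfl, rfl⟩ := inv5 _ _ hst
          match y with
          | [] => exact absurd hrun.2 (show ¬((_:Fin 8) = 3) by decide)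
          | a :: y =>
            obtain ⟨q, l4, hst, hrun, rfl⟩ := hrun
            obtain ⟨rfl, rfl⟩ := inv6 _ _ hst
            match y with
            | [] => exact absurd hrun.2 (show ¬((_:Fin 8) = 3) by decide)
            | a :: y =>
              obtain ⟨q, l5, hst, hrun, rfl⟩ := hrun
              obtain ⟨rfl, rfl⟩ := inv7 _ _ hst
              obtain ⟨b, rfl, rfl⟩ := ih y.length (by simp at hlen; omega) y l5 rfl hrun
              exact ⟨b + 1, rfl, rfl⟩

theorem soundA : ∀ n (y : List (Fin 5)) (l : List (Fin 8)), y.length = n →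
    M8.RunFrom 0 y l → ∃ a b, y = W3 a ++ 0 :: W5 b ∧ l = L3 a ++ 0 :: L5 b := by
  intro n
  induction n using Nat.strong_induction_on with
  | _ n ih =>
    intro y l hlen hrun
    match y with
    | [] => exact absurd hrun.2 (show ¬((_:Fin 8) = 3) by decide)
    | a :: y =>
      obtain ⟨q, l1, hst, hrun, rfl⟩ := hrun
      rcases inv0 _ _ hst with ⟨rfl, rfl⟩ | ⟨rfl, rfl⟩
      · -- went around the triangle: letters 1,2,3 then back at 0
        match y with
        | [] => exact absurd hrun.2 (show ¬((_:Fin 8) = 3) by decide)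
        | a :: y =>
          obtain ⟨q, l2, hst, hrun, rfl⟩ := hrun
          obtain ⟨rfl, rfl⟩ := inv1 _ _ hst
          match y with
          | [] => exact absurd hrun.2 (show ¬((_:Fin 8) = 3) by decide)
          | a :: y =>
            obtain ⟨q, l3, hst, hrun, rfl⟩ := hrun
            obtain ⟨rfl, rfl⟩ := inv2 _ _ hst
            obtain ⟨a', b, rfl, rfl⟩ := ih y.length (by simp at hlen; omega) y l3 rfl hrun
            exact ⟨a' + 1, b, rfl, rfl⟩
      · -- letter 0, moving to B part
        obtain ⟨b, rfl, rfl⟩ := soundB y.length y l1 rfl hrun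
        exact ⟨0, b, rfl, rfl⟩

def canonical : List (Fin 8) := L3 2 ++ 0 :: L5 2

theorem M8_unique : M8.UniquelyAccepts wordW := by
  constructor
  · exact ⟨canonical, by have := runA 2 2; exact this⟩
  · intro y l y' l' hy hy' hr hr'
    obtain ⟨a, b, rfl, rfl⟩ := soundA y.length y l rfl hr
    obtain ⟨a', b', rfl, rfl⟩ := soundA y'.length y' l' rfl hr'
    have hwl : wordW.length = 17 := rfl
    have h1 : 3 * a + (5 * b + 1) = 17 := by
      simpa [W3_length, W5_length, hwl] using hy
    have h2 : 3 * a' + (5 * b' + 1) = 17 := by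
      simpa [W3_length, W5_length, hwl] using hy'
    have : a = 2 ∧ b = 2 := by omega
    have : a' = 2 ∧ b' = 2 := by omega
    obtain ⟨rfl, rfl⟩ := ‹a = 2 ∧ b = 2›
    obtain ⟨rfl, rfl⟩ := ‹a' = 2 ∧ b' = 2›
    exact ⟨rfl, rfl⟩

theorem wordW_eq : wordW = W3 2 ++ 0 :: W5 2 := by decide

/-- The nondeterministic automatic complexity of `w = (123)²0(12341)²` is exactly 8. -/
theorem AN_wordW_eq_eight : AN wordW = 8 := by
  have hub : 8 ∈ {m : ℕ | ∃ M : NFAc (Fin 5) m, M.UniquelyAccepts wordW} := ⟨M8, M8_unique⟩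
  exact le_antisymm (Nat.sInf_le hub) (le_csInf ⟨8, hub⟩ fun m hm => lower m hm)
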